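/- For every even integer n ≥ 6, the bagel graph B_n := K_2 ⊠ C_{n/2} (the strong product of an edge and a cycle of length n/2) contains no K_{2,5} minor. -/

import Mathlib

set_option linter.unusedSectionVars false
set_option maxHeartbeats 1000000

/-- The induced subgraph on a vertex subset is connected. -/
def SetConnected {V : Type} (G : SimpleGraph V) (s : Set V) : Prop :=
  (G.induce s).Connected

/-- Two vertex subsets are adjacent: some edge of `G` joins them. -/
def AdjSets {V : Type} (G : SimpleGraph V) (s t : Set V) : Prop :=
  ∃ a ∈ s, ∃ b ∈ t, G.Adj a b

/-- A `K_{2,ι}`-model in `G`. -/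
def IsK2Model {V : Type} (G : SimpleGraph V) (X1 X2 : Set V)
    {ι : Type} (Y : ι → Set V) : Prop :=
  Disjoint X1 X2 ∧ (∀ j, Disjoint X1 (Y j) ∧ Disjoint X2 (Y j)) ∧
  (Pairwise fun j k => Disjoint (Y j) (Y k)) ∧
  SetConnected G X1 ∧ SetConnected G X2 ∧ (∀ j, SetConnected G (Y j)) ∧
  (∀ j, AdjSets G X1 (Y j) ∧ AdjSets G X2 (Y j))

/-- The bagel graph `B_n = K₂ ⊠ C_p` (`n = 2p`): vertices `Fin 2 × ZMod p`,
with `(a,i)` adjacent to `(b,j)` iff they are distinct and `i - j ∈ {0, ±1}`. -/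
def Bagel (p : ℕ) : SimpleGraph (Fin 2 × ZMod p) :=
  SimpleGraph.fromRel (fun x y => x.2 = y.2 ∨ x.2 = y.2 + 1 ∨ y.2 = x.2 + 1)

namespace BagelNoK25

abbrev V (p : ℕ) := Fin 2 × ZMod p

variable {p : ℕ}

/-- column coordinate relative to base `e` -/
def phi (e z : ZMod p) : ℕ := (z - e).val

lemma bagel_adj {u v : V p} :
    (Bagel p).Adj u v ↔ u ≠ v ∧ (u.2 = v.2 ∨ u.2 = v.2 + 1 ∨ v.2 = u.2 + 1) := by
  unfold Bagel
  rw [SimpleGraph.fromRel_adj]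
  constructor
  · rintro ⟨h1, h2⟩; exact ⟨h1, by tauto⟩
  · rintro ⟨h1, h2⟩; exact ⟨h1, by tauto⟩

section
variable [NeZero p]

lemma phi_lt (e z : ZMod p) : phi e z < p := ZMod.val_lt _

lemma phi_eq_zero {e z : ZMod p} : phi e z = 0 ↔ z = e := by
  unfold phi
  rw [ZMod.val_eq_zero, sub_eq_zero]

lemma phi_inj {e z w : ZMod p} (h : phi e z = phi e w) : z = w := by
  have h1 := ZMod.val_injective p h
  have h2 : z - e + e = w - e + e := by rw [h1]
  simpa using h2

lemma phi_succ (hp : 1 < p) {e z : ZMod p} (h : z + 1 ≠ e) :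
    phi e (z + 1) = phi e z + 1 := by
  have h1 : (z + 1) - e = (z - e) + 1 := by ring
  unfold phi
  rw [h1]
  have hne : (z - e).val ≠ p - 1 := by
    intro hv
    have heq : z - e = (-1 : ZMod p) := by
      apply ZMod.val_injective p
      rw [hv]
      have h2 : ((p - 1 : ℕ) : ZMod p).val = p - 1 := ZMod.val_cast_of_lt (by omega)
      rw [← h2]
      congr 1
      push_cast [Nat.cast_sub (by omega : 1 ≤ p)]
      simp
    apply h
    have h3 : z + 1 - e = 0 := by rw [show z + 1 - e = z - e + 1 from by ring, heq]; ring
    exact sub_eq_zero.mp h3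
  haveI : Fact (1 < p) := ⟨hp⟩
  have hlt : (z - e).val + (1 : ZMod p).val < p := by
    rw [ZMod.val_one]
    have := ZMod.val_lt (z - e)
    omega
  rw [ZMod.val_add_of_lt hlt, ZMod.val_one]

lemma phi_eq_iff {e z : ZMod p} {t : ℕ} (ht : t < p) :
    phi e z = t ↔ z = e + (t : ZMod p) := by
  constructor
  · intro h
    have h2 : ((z - e).val : ZMod p) = ((t : ℕ) : ZMod p) := by
      rw [show (z - e).val = t from h]
    rw [ZMod.natCast_rightInverse (z - e)] at h2
    rw [← h2]; ring
  · intro h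
    subst h
    simp only [phi, add_sub_cancel_left]
    exact ZMod.val_cast_of_lt ht

lemma val_neg_one' (hp : 1 < p) : (-1 : ZMod p).val = p - 1 := by
  have h1 : ((p - 1 : ℕ) : ZMod p) = (-1 : ZMod p) := by
    push_cast [Nat.cast_sub (by omega : 1 ≤ p)]
    simp
  rw [← h1]
  exact ZMod.val_cast_of_lt (by omega)

lemma adj_phi_total (hp : 1 < p) {u v : V p} (h : (Bagel p).Adj u v) (e : ZMod p) :
    phi e u.2 = phi e v.2 ∨ phi e u.2 = phi e v.2 + 1 ∨ phi e v.2 = phi e u.2 + 1 ∨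
    (phi e u.2 = 0 ∧ phi e v.2 = p - 1) ∨ (phi e v.2 = 0 ∧ phi e u.2 = p - 1) := by
  rcases (bagel_adj.mp h).2 with h1 | h1 | h1
  · left; rw [h1]
  · by_cases hu : u.2 = e
    · right; right; right; left
      refine ⟨by simp [phi, hu], ?_⟩
      have hv : v.2 = -1 + e := by
        have h2 : v.2 + 1 = e := by rw [← h1, hu]
        linear_combination h2
      simp only [phi, hv, add_sub_cancel_right]
      exact val_neg_one' hp
    · right; left
      rw [h1]; rw [h1] at hu
      exact phi_succ hp hu
  · by_cases hv : v.2 = e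
    · right; right; right; right
      refine ⟨by simp [phi, hv], ?_⟩
      have hu : u.2 = -1 + e := by
        have h2 : u.2 + 1 = e := by rw [← h1, hv]
        linear_combination h2
      simp only [phi, hu, add_sub_cancel_right]
      exact val_neg_one' hp
    · right; right; left
      rw [h1]; rw [h1] at hv
      exact phi_succ hp hv

lemma reach_side2 (hp : 1 < p) {Y : Set (V p)} (hcon : SetConnected (Bagel p) Y)
    (e : ZMod p) (t1 t2 : ℕ) (ht2 : t2 < p)
    (hY : ∀ v ∈ Y, phi e v.2 ≠ t1 ∧ phi e v.2 ≠ t2) :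
    ∀ u ∈ Y, ∀ w ∈ Y,
      ((t1 < phi e u.2 ∧ phi e u.2 < t2) ↔ (t1 < phi e w.2 ∧ phi e w.2 < t2)) := by
  intro u hu w hw
  have hreach : ((Bagel p).induce Y).Reachable ⟨u, hu⟩ ⟨w, hw⟩ := hcon.preconnected _ _
  obtain ⟨wk⟩ := hreach
  have main : ∀ (a b : ↥Y) (_ : ((Bagel p).induce Y).Walk a b),
      ((t1 < phi e (a : V p).2 ∧ phi e (a : V p).2 < t2) ↔
       (t1 < phi e (b : V p).2 ∧ phi e (b : V p).2 < t2)) := by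
    intro a b wk2
    induction wk2 with
    | nil => exact Iff.rfl
    | @cons a' b' c' hadj tail ih =>
      refine Iff.trans ?_ ih
      have hadj' : (Bagel p).Adj (a' : V p) (b' : V p) := by simpa using hadj
      have h5 := adj_phi_total hp hadj' e
      have ha := hY _ a'.2
      have hb := hY _ b'.2
      have hla := phi_lt e (a' : V p).2
      have hlb := phi_lt e (b' : V p).2
      omega
  exact main _ _ wk

lemma finisher {Y : Fin 5 → Set (V p)}
    (hdYY : Pairwise fun j k => Disjoint (Y j) (Y k)) (v1 v2 v3 v4 : V p)
    (h : ∀ k, ∃ v ∈ Y k, v = v1 ∨ v = v2 ∨ v = v3 ∨ v = v4) : False := by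
  classical
  let s : Finset (V p) := {v1, v2, v3, v4}
  have hf : ∀ k : Fin 5, ∃ v : V p, v ∈ Y k ∧ v ∈ s := by
    intro k
    obtain ⟨v, hv, hmem⟩ := h k
    exact ⟨v, hv, by simp [s]; tauto⟩
  choose f hf1 hf2 using hf
  have hcard : Fintype.card s < Fintype.card (Fin 5) := by
    have hs : s.card ≤ 4 := by
      apply le_trans (Finset.card_insert_le _ _)
      apply Nat.succ_le_succ
      apply le_trans (Finset.card_insert_le _ _)
      apply Nat.succ_le_succ
      apply le_trans (Finset.card_insert_le _ _)
      simp
    simp only [Fintype.card_coe, Fintype.card_fin]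
    omega
  obtain ⟨k, l, hkl, heq⟩ := Fintype.exists_ne_map_eq_of_card_lt
    (fun k => (⟨f k, hf2 k⟩ : s)) hcard
  have hfe : f k = f l := by simpa using heq
  exact Set.disjoint_left.mp (hdYY hkl) (hf1 k) (hfe ▸ hf1 l)

def otherV (x : V p) : V p := (1 - x.1, x.2)

lemma eq_otherV {x v : V p} (h2 : v.2 = x.2) (h1 : v ≠ x) : v = otherV x := by
  have hne : v.1 ≠ x.1 := fun hh => h1 (Prod.ext hh h2)
  have h3 : v.1 = 1 - x.1 := by omega
  exact Prod.ext h3 h2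

lemma avoid_col_occ {Xi Yk : Set (V p)} {x : V p} (e : ZMod p) (hx : x ∈ Xi)
    (hdisj : Disjoint Xi Yk) (hmiss : ∀ v ∈ Yk, v ≠ otherV x) :
    ∀ v ∈ Yk, phi e v.2 ≠ phi e x.2 := by
  intro v hv ht
  have hcol : v.2 = x.2 := phi_inj ht
  have hvx : v ≠ x := fun he => Set.disjoint_left.mp hdisj hx (he ▸ hv)
  exact hmiss v hv (eq_otherV hcol hvx)

lemma avoid_col_free {Yk : Set (V p)} {t : ℕ} (ht : t < p) (e : ZMod p)
    (hmiss : ∀ v ∈ Yk, v ≠ ((0 : Fin 2), e + (t : ZMod p)) ∧ v ≠ ((1 : Fin 2), e + (t : ZMod p))) :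
    ∀ v ∈ Yk, phi e v.2 ≠ t := by
  intro v hv heq
  have hcol : v.2 = e + (t : ZMod p) := (phi_eq_iff ht).mp heq
  have h1 : v.1 = 0 ∨ v.1 = 1 := by omega
  rcases h1 with h1 | h1
  · exact (hmiss v hv).1 (Prod.ext h1 hcol)
  · exact (hmiss v hv).2 (Prod.ext h1 hcol)

lemma mem_pair_of_col {x' y' v : V p} (h1 : x'.2 = v.2) (h2 : y'.2 = v.2)
    (hne : x' ≠ y') : v = x' ∨ v = y' := by
  have hr : x'.1 ≠ y'.1 := by
    intro hh; exact hne (Prod.ext hh (h1.trans h2.symm))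
  have h3 : v.1 = x'.1 ∨ v.1 = y'.1 := by omega
  rcases h3 with h3 | h3
  · left; exact Prod.ext h3 h1.symm
  · right; exact Prod.ext h3 h2.symm

lemma conn_nonempty {G : SimpleGraph (V p)} {s : Set (V p)} (h : SetConnected G s) :
    s.Nonempty := by
  obtain ⟨⟨v, hv⟩⟩ := h.nonempty
  exact ⟨v, hv⟩

/-- interval structure: a connected set avoiding column `e` lies in an interval
of `phi e` values, with both endpoints attained. -/
lemma exists_interval (hp : 3 ≤ p) {X : Set (V p)} (hcon : SetConnected (Bagel p) X)
    (e : ZMod p) (havoid : ∀ v ∈ X, v.2 ≠ e) :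
    ∃ m M : ℕ, 1 ≤ m ∧ m ≤ M ∧ M ≤ p - 1 ∧
      (∃ x ∈ X, phi e x.2 = m) ∧ (∃ x ∈ X, phi e x.2 = M) ∧
      (∀ x ∈ X, m ≤ phi e x.2 ∧ phi e x.2 ≤ M) := by
  obtain ⟨x1, hx1⟩ := conn_nonempty hcon
  set Im : Set ℕ := {t | ∃ x ∈ X, phi e x.2 = t} with hIm
  have hImne : Im.Nonempty := ⟨phi e x1.2, x1, hx1, rfl⟩
  have hbdd : BddAbove Im := ⟨p, by rintro t ⟨x, hx, rfl⟩; exact le_of_lt (phi_lt e x.2)⟩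
  refine ⟨sInf Im, sSup Im, ?_, ?_, ?_, Nat.sInf_mem hImne, Nat.sSup_mem hImne hbdd, ?_⟩
  · obtain ⟨x, hx, hphix⟩ := Nat.sInf_mem hImne
    rcases Nat.eq_zero_or_pos (sInf Im) with h | h
    · exfalso
      rw [h] at hphix
      exact havoid x hx (phi_eq_zero.mp hphix)
    · exact h
  · exact csInf_le_csSup hImne (OrderBot.bddBelow Im) hbdd
  · obtain ⟨x, hx, hphix⟩ := Nat.sSup_mem hImne hbdd
    have := phi_lt e x.2
    omega
  · intro x hx
    exact ⟨Nat.sInf_le ⟨x, hx, rfl⟩, le_csSup hbdd ⟨x, hx, rfl⟩⟩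

/-- co-interval (gap) structure: for a connected set containing a vertex in
column `e`, the set of avoided `phi e` values is exactly an interval. -/
lemma exists_gap (hp : 3 ≤ p) {X : Set (V p)} (hcon : SetConnected (Bagel p) X)
    {x0 : V p} (hx0 : x0 ∈ X) (hx0e : x0.2 = e)
    (hne : ∃ t, t < p ∧ ∀ v ∈ X, phi e v.2 ≠ t) :
    ∃ g1 g2 : ℕ, 1 ≤ g1 ∧ g1 ≤ g2 ∧ g2 ≤ p - 1 ∧
      (∀ t, t < p → ((∀ v ∈ X, phi e v.2 ≠ t) ↔ (g1 ≤ t ∧ t ≤ g2))) := by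
  set S : Set ℕ := {t | t < p ∧ ∀ v ∈ X, phi e v.2 ≠ t} with hS
  obtain ⟨t0, ht0p, ht0⟩ := hne
  have hSne : S.Nonempty := ⟨t0, ht0p, ht0⟩
  have hbdd : BddAbove S := ⟨p, by rintro t ⟨h1, h2⟩; omega⟩
  have hg1 := Nat.sInf_mem hSne
  have hg2 := Nat.sSup_mem hSne hbdd
  have hphix0 : phi e x0.2 = 0 := phi_eq_zero.mpr hx0e
  have h0S : (0 : ℕ) ∉ S := fun ⟨_, h⟩ => h x0 hx0 hphix0
  refine ⟨sInf S, sSup S, ?_, csInf_le_csSup hSne (OrderBot.bddBelow S) hbdd, by have := hg2.1; omega, ?_⟩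
  · rcases Nat.eq_zero_or_pos (sInf S) with h | h
    · exact absurd (h ▸ hg1) h0S
    · exact h
  · intro t htp
    constructor
    · intro hall
      exact ⟨Nat.sInf_le ⟨htp, hall⟩, le_csSup hbdd ⟨htp, hall⟩⟩
    · rintro ⟨h1, h2⟩
      by_contra hcon2
      push_neg at hcon2
      obtain ⟨v, hv, hphiv⟩ := hcon2
      have hne1 : t ≠ sInf S := fun he => hg1.2 v hv (hphiv.trans he)
      have hne2 : t ≠ sSup S := fun he => hg2.2 v hv (hphiv.trans he)
      have hYav : ∀ w ∈ X, phi e w.2 ≠ sInf S ∧ phi e w.2 ≠ sSup S :=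
        fun w hw => ⟨hg1.2 w hw, hg2.2 w hw⟩
      have hiff := reach_side2 (by omega) hcon e (sInf S) (sSup S) (by have := hg2.1; omega)
        hYav v hv x0 hx0
      rw [hphiv, hphix0] at hiff
      omega

/-- the "both gap endpoints" leaf: if every `Y k` value lies in `[g1,g2]`,
`X`'s values avoid `[g1,g2]`, `X` is adjacent to `Y k`, and `Y k` avoids the
endpoint values, contradiction. -/
lemma gapLeaf (hp : 3 ≤ p) {X Yk : Set (V p)} (e : ZMod p) (g1 g2 : ℕ)
    (h1 : 1 ≤ g1) (h2 : g2 ≤ p - 1)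
    (hYrange : ∀ v ∈ Yk, g1 ≤ phi e v.2 ∧ phi e v.2 ≤ g2)
    (hXout : ∀ x ∈ X, ¬(g1 ≤ phi e x.2 ∧ phi e x.2 ≤ g2))
    (hAdj : ∃ a ∈ X, ∃ b ∈ Yk, (Bagel p).Adj a b)
    (havoid : ∀ v ∈ Yk, phi e v.2 ≠ g1 ∧ phi e v.2 ≠ g2) : False := by
  obtain ⟨x, hx, u, hu, hxu⟩ := hAdj
  have h5 := adj_phi_total (by omega) hxu e
  have hxo := hXout x hx
  have hur := hYrange u hu
  have hua := havoid u hu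
  have hlx := phi_lt e x.2
  have hlu := phi_lt e u.2
  omega

end

section
variable [NeZero p]

lemma OCleaf (hp : 3 ≤ p) {X1 X2 : Set (V p)} {Y : Fin 5 → Set (V p)} (c : ZMod p)
    (hd12 : Disjoint X1 X2) (hdXY : ∀ j, Disjoint X1 (Y j) ∧ Disjoint X2 (Y j))
    (hdYY : Pairwise fun j k => Disjoint (Y j) (Y k))
    (hcY : ∀ j, SetConnected (Bagel p) (Y j))
    (hadj : ∀ j, AdjSets (Bagel p) X1 (Y j) ∧ AdjSets (Bagel p) X2 (Y j))
    (gA1 gA2 gB1 gB2 : ℕ)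
    (hbA1 : 1 ≤ gA1) (hbA2 : gA1 ≤ gA2) (hbA3 : gA2 ≤ p - 1)
    (hbB1 : 1 ≤ gB1) (hbB2 : gB1 ≤ gB2) (hbB3 : gB2 ≤ p - 1)
    (hSA : ∀ t, t < p → ((∀ v ∈ X1, phi c v.2 ≠ t) ↔ (gA1 ≤ t ∧ t ≤ gA2)))
    (hSB : ∀ t, t < p → ((∀ v ∈ X2, phi c v.2 ≠ t) ↔ (gB1 ≤ t ∧ t ≤ gB2)))
    (hlt1 : gA1 < gB1) (hlt2 : gA2 < gB2) : False := by
  have hexA : ∀ t, t < p → ¬(gA1 ≤ t ∧ t ≤ gA2) → ∃ x ∈ X1, phi c x.2 = t := by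
    intro t htp hnr
    by_contra hc; push_neg at hc
    exact hnr ((hSA t htp).mp hc)
  have hexB : ∀ t, t < p → ¬(gB1 ≤ t ∧ t ≤ gB2) → ∃ y ∈ X2, phi c y.2 = t := by
    intro t htp hnr
    by_contra hc; push_neg at hc
    exact hnr ((hSB t htp).mp hc)
  have hX1out : ∀ x ∈ X1, ¬(gA1 ≤ phi c x.2 ∧ phi c x.2 ≤ gA2) :=
    fun x hx hr => ((hSA _ (phi_lt _ _)).mpr hr) x hx rfl
  have hX2out : ∀ y ∈ X2, ¬(gB1 ≤ phi c y.2 ∧ phi c y.2 ≤ gB2) :=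
    fun y hy hr => ((hSB _ (phi_lt _ _)).mpr hr) y hy rfl
  have hYrange : ∀ k, ∀ v ∈ Y k,
      (gA1 ≤ phi c v.2 ∧ phi c v.2 ≤ gA2) ∨ (gB1 ≤ phi c v.2 ∧ phi c v.2 ≤ gB2) := by
    intro k v hv
    by_contra hr
    push_neg at hr
    obtain ⟨x', hx', hphix'⟩ := hexA _ (phi_lt c v.2) (fun hh => absurd hh (by omega))
    obtain ⟨y', hy', hphiy'⟩ := hexB _ (phi_lt c v.2) (fun hh => absurd hh (by omega))
    have hxy : x' ≠ y' := fun he => Set.disjoint_left.mp hd12 hx' (he ▸ hy')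
    rcases mem_pair_of_col (phi_inj hphix') (phi_inj hphiy') hxy with he | he
    · exact Set.disjoint_left.mp (hdXY k).1 (he ▸ hx' : v ∈ X1) hv
    · exact Set.disjoint_left.mp (hdXY k).2 (he ▸ hy' : v ∈ X2) hv
  by_cases hover : gB1 ≤ gA2
  · -- overlapping gaps
    obtain ⟨yA1, hyA1, hphiyA1⟩ := hexB gA1 (by omega) (by omega)
    obtain ⟨xB2, hxB2, hphixB2⟩ := hexA gB2 (by omega) (by omega)
    apply finisher hdYY (otherV yA1) (otherV xB2)
      ((0 : Fin 2), c + (gB1 : ZMod p)) ((1 : Fin 2), c + (gB1 : ZMod p))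
    intro k
    by_contra hc
    push_neg at hc
    have hav1 : ∀ v ∈ Y k, phi c v.2 ≠ gA1 := by
      have := avoid_col_occ c hyA1 (hdXY k).2 (fun v hv => (hc v hv).1)
      rwa [hphiyA1] at this
    have hav2 : ∀ v ∈ Y k, phi c v.2 ≠ gB2 := by
      have := avoid_col_occ c hxB2 (hdXY k).1 (fun v hv => (hc v hv).2.1)
      rwa [hphixB2] at this
    have hav3 : ∀ v ∈ Y k, phi c v.2 ≠ gB1 :=
      avoid_col_free (by omega) c (fun v hv => ⟨(hc v hv).2.2.1, (hc v hv).2.2.2⟩)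
    have hYav : ∀ v ∈ Y k, phi c v.2 ≠ 0 ∧ phi c v.2 ≠ gB1 := by
      intro v hv
      have hr := hYrange k v hv
      have h3 := hav3 v hv
      omega
    obtain ⟨x, hx, u, hu, hxu⟩ := (hadj k).1
    obtain ⟨y, hy, w, hw, hyw⟩ := (hadj k).2
    have hiff := reach_side2 (by omega) (hcY k) c 0 gB1 (by omega) hYav u hu w hw
    have h5u := adj_phi_total (by omega) hxu c
    have h5w := adj_phi_total (by omega) hyw c
    have f1 := hX1out x hx
    have f2 := hX2out y hy
    have f3 := hYrange k u hu
    have f4 := hYrange k w hw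
    have f5 := hav1 u hu
    have f6 := hav2 u hu
    have f7 := hav3 u hu
    have f8 := hav1 w hw
    have f9 := hav2 w hw
    have f10 := hav3 w hw
    have l1 := phi_lt c x.2
    have l2 := phi_lt c u.2
    have l3 := phi_lt c y.2
    have l4 := phi_lt c w.2
    omega
  · -- separated gaps
    obtain ⟨yA1, hyA1, hphiyA1⟩ := hexB gA1 (by omega) (by omega)
    obtain ⟨yA2, hyA2, hphiyA2⟩ := hexB gA2 (by omega) (by omega)
    obtain ⟨xB1, hxB1, hphixB1⟩ := hexA gB1 (by omega) (by omega)
    obtain ⟨xB2, hxB2, hphixB2⟩ := hexA gB2 (by omega) (by omega)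
    apply finisher hdYY (otherV yA1) (otherV yA2) (otherV xB1) (otherV xB2)
    intro k
    by_contra hc
    push_neg at hc
    have hav1 : ∀ v ∈ Y k, phi c v.2 ≠ gA1 := by
      have := avoid_col_occ c hyA1 (hdXY k).2 (fun v hv => (hc v hv).1)
      rwa [hphiyA1] at this
    have hav2 : ∀ v ∈ Y k, phi c v.2 ≠ gA2 := by
      have := avoid_col_occ c hyA2 (hdXY k).2 (fun v hv => (hc v hv).2.1)
      rwa [hphiyA2] at this
    have hav3 : ∀ v ∈ Y k, phi c v.2 ≠ gB1 := by
      have := avoid_col_occ c hxB1 (hdXY k).1 (fun v hv => (hc v hv).2.2.1)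
      rwa [hphixB1] at this
    have hav4 : ∀ v ∈ Y k, phi c v.2 ≠ gB2 := by
      have := avoid_col_occ c hxB2 (hdXY k).1 (fun v hv => (hc v hv).2.2.2)
      rwa [hphixB2] at this
    have hYav : ∀ v ∈ Y k, phi c v.2 ≠ 0 ∧ phi c v.2 ≠ gA2 := by
      intro v hv
      have hr := hYrange k v hv
      have h2 := hav2 v hv
      omega
    obtain ⟨x, hx, u, hu, hxu⟩ := (hadj k).1
    obtain ⟨y, hy, w, hw, hyw⟩ := (hadj k).2
    have hiff := reach_side2 (by omega) (hcY k) c 0 gA2 (by omega) hYav u hu w hw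
    have h5u := adj_phi_total (by omega) hxu c
    have h5w := adj_phi_total (by omega) hyw c
    have f1 := hX1out x hx
    have f2 := hX2out y hy
    have f3 := hYrange k u hu
    have f4 := hYrange k w hw
    have f5 := hav1 u hu
    have f6 := hav2 u hu
    have f7 := hav3 u hu
    have f8 := hav4 u hu
    have f9 := hav1 w hw
    have f10 := hav2 w hw
    have f11 := hav3 w hw
    have f12 := hav4 w hw
    have l1 := phi_lt c x.2
    have l2 := phi_lt c u.2
    have l3 := phi_lt c y.2
    have l4 := phi_lt c w.2
    omega

end

section
variable [NeZero p]

lemma no_model (hp : 3 ≤ p) (X1 X2 : Set (V p)) (Y : Fin 5 → Set (V p))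
    (h : IsK2Model (Bagel p) X1 X2 Y) : False := by
  obtain ⟨hd12, hdXY, hdYY, hc1, hc2, hcY, hadj⟩ := h
  by_cases hOT : ∃ x ∈ X1, ∃ y ∈ X2, x.2 = y.2
  · -- CASE O : the two column images intersect
    obtain ⟨x0, hx0, y0, hy0, hcol⟩ := hOT
    set c := x0.2 with hc
    have hy0c : y0.2 = c := hcol.symm
    by_cases hSAe : ∃ t, t < p ∧ ∀ v ∈ X1, phi c v.2 ≠ t
    · obtain ⟨gA1, gA2, hbA1, hbA12, hbA3, hSA⟩ := exists_gap hp hc1 hx0 rfl hSAe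
      have hexA : ∀ t, t < p → ¬(gA1 ≤ t ∧ t ≤ gA2) → ∃ x ∈ X1, phi c x.2 = t := by
        intro t htp hnr
        by_contra hcc; push_neg at hcc
        exact hnr ((hSA t htp).mp hcc)
      have hX1out : ∀ x ∈ X1, ¬(gA1 ≤ phi c x.2 ∧ phi c x.2 ≤ gA2) :=
        fun x hx hr => ((hSA _ (phi_lt _ _)).mpr hr) x hx rfl
      by_cases hSBe : ∃ t, t < p ∧ ∀ v ∈ X2, phi c v.2 ≠ t
      · obtain ⟨gB1, gB2, hbB1, hbB12, hbB3, hSB⟩ := exists_gap hp hc2 hy0 hy0c hSBe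
        have hexB : ∀ t, t < p → ¬(gB1 ≤ t ∧ t ≤ gB2) → ∃ y ∈ X2, phi c y.2 = t := by
          intro t htp hnr
          by_contra hcc; push_neg at hcc
          exact hnr ((hSB t htp).mp hcc)
        have hX2out : ∀ y ∈ X2, ¬(gB1 ≤ phi c y.2 ∧ phi c y.2 ≤ gB2) :=
          fun y hy hr => ((hSB _ (phi_lt _ _)).mpr hr) y hy rfl
        have hYrange : ∀ k, ∀ v ∈ Y k,
            (gA1 ≤ phi c v.2 ∧ phi c v.2 ≤ gA2) ∨ (gB1 ≤ phi c v.2 ∧ phi c v.2 ≤ gB2) := by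
          intro k v hv
          by_contra hr
          push_neg at hr
          obtain ⟨x', hx', hphix'⟩ := hexA _ (phi_lt c v.2) (fun hh => absurd hh (by omega))
          obtain ⟨y', hy', hphiy'⟩ := hexB _ (phi_lt c v.2) (fun hh => absurd hh (by omega))
          have hxy : x' ≠ y' := fun he => Set.disjoint_left.mp hd12 hx' (he ▸ hy')
          rcases mem_pair_of_col (phi_inj hphix') (phi_inj hphiy') hxy with he | he
          · exact Set.disjoint_left.mp (hdXY k).1 (he ▸ hx' : v ∈ X1) hv
          · exact Set.disjoint_left.mp (hdXY k).2 (he ▸ hy' : v ∈ X2) hv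
        by_cases hO2 : gA1 ≤ gB1 ∧ gB2 ≤ gA2
        · -- B-gap nested in A-gap : slot columns are endpoints of A-gap
          apply finisher hdYY ((0 : Fin 2), c + (gA1 : ZMod p)) ((1 : Fin 2), c + (gA1 : ZMod p))
            ((0 : Fin 2), c + (gA2 : ZMod p)) ((1 : Fin 2), c + (gA2 : ZMod p))
          intro k
          by_contra hcc
          push_neg at hcc
          have hav1 : ∀ v ∈ Y k, phi c v.2 ≠ gA1 :=
            avoid_col_free (by omega) c (fun v hv => ⟨(hcc v hv).1, (hcc v hv).2.1⟩)
          have hav2 : ∀ v ∈ Y k, phi c v.2 ≠ gA2 :=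
            avoid_col_free (by omega) c (fun v hv => ⟨(hcc v hv).2.2.1, (hcc v hv).2.2.2⟩)
          refine gapLeaf hp c gA1 gA2 hbA1 hbA3 ?_ hX1out (hadj k).1
            (fun v hv => ⟨hav1 v hv, hav2 v hv⟩)
          intro v hv
          have := hYrange k v hv
          omega
        · by_cases hO3 : gB1 ≤ gA1 ∧ gA2 ≤ gB2
          · apply finisher hdYY ((0 : Fin 2), c + (gB1 : ZMod p)) ((1 : Fin 2), c + (gB1 : ZMod p))
              ((0 : Fin 2), c + (gB2 : ZMod p)) ((1 : Fin 2), c + (gB2 : ZMod p))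
            intro k
            by_contra hcc
            push_neg at hcc
            have hav1 : ∀ v ∈ Y k, phi c v.2 ≠ gB1 :=
              avoid_col_free (by omega) c (fun v hv => ⟨(hcc v hv).1, (hcc v hv).2.1⟩)
            have hav2 : ∀ v ∈ Y k, phi c v.2 ≠ gB2 :=
              avoid_col_free (by omega) c (fun v hv => ⟨(hcc v hv).2.2.1, (hcc v hv).2.2.2⟩)
            refine gapLeaf hp c gB1 gB2 hbB1 hbB3 ?_ hX2out (hadj k).2
              (fun v hv => ⟨hav1 v hv, hav2 v hv⟩)
            intro v hv
            have := hYrange k v hv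
            omega
          · have hcr : (gA1 < gB1 ∧ gA2 < gB2) ∨ (gB1 < gA1 ∧ gB2 < gA2) := by omega
            rcases hcr with ⟨h1, h2⟩ | ⟨h1, h2⟩
            · exact OCleaf hp c hd12 hdXY hdYY hcY hadj gA1 gA2 gB1 gB2
                hbA1 hbA12 hbA3 hbB1 hbB12 hbB3 hSA hSB h1 h2
            · exact OCleaf hp c hd12.symm (fun j => ⟨(hdXY j).2, (hdXY j).1⟩) hdYY hcY
                (fun j => ⟨(hadj j).2, (hadj j).1⟩) gB1 gB2 gA1 gA2
                hbB1 hbB12 hbB3 hbA1 hbA12 hbA3 hSB hSA h1 h2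
      · -- X2 occupies every column
        have hexB : ∀ t, t < p → ∃ y ∈ X2, phi c y.2 = t := by
          intro t htp
          by_contra hcc; push_neg at hcc
          exact hSBe ⟨t, htp, hcc⟩
        apply finisher hdYY ((0 : Fin 2), c + (gA1 : ZMod p)) ((1 : Fin 2), c + (gA1 : ZMod p))
          ((0 : Fin 2), c + (gA2 : ZMod p)) ((1 : Fin 2), c + (gA2 : ZMod p))
        intro k
        by_contra hcc
        push_neg at hcc
        have hav1 : ∀ v ∈ Y k, phi c v.2 ≠ gA1 :=
          avoid_col_free (by omega) c (fun v hv => ⟨(hcc v hv).1, (hcc v hv).2.1⟩)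
        have hav2 : ∀ v ∈ Y k, phi c v.2 ≠ gA2 :=
          avoid_col_free (by omega) c (fun v hv => ⟨(hcc v hv).2.2.1, (hcc v hv).2.2.2⟩)
        refine gapLeaf hp c gA1 gA2 hbA1 hbA3 ?_ hX1out (hadj k).1
          (fun v hv => ⟨hav1 v hv, hav2 v hv⟩)
        intro v hv
        by_contra hr
        push_neg at hr
        obtain ⟨x', hx', hphix'⟩ := hexA _ (phi_lt c v.2) (fun hh => absurd hh (by omega))
        obtain ⟨y', hy', hphiy'⟩ := hexB _ (phi_lt c v.2)
        have hxy : x' ≠ y' := fun he => Set.disjoint_left.mp hd12 hx' (he ▸ hy')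
        rcases mem_pair_of_col (phi_inj hphix') (phi_inj hphiy') hxy with he | he
        · exact Set.disjoint_left.mp (hdXY k).1 (he ▸ hx' : v ∈ X1) hv
        · exact Set.disjoint_left.mp (hdXY k).2 (he ▸ hy' : v ∈ X2) hv
    · -- X1 occupies every column
      have hexA : ∀ t, t < p → ∃ x ∈ X1, phi c x.2 = t := by
        intro t htp
        by_contra hcc; push_neg at hcc
        exact hSAe ⟨t, htp, hcc⟩
      by_cases hSBe : ∃ t, t < p ∧ ∀ v ∈ X2, phi c v.2 ≠ t
      · obtain ⟨gB1, gB2, hbB1, hbB12, hbB3, hSB⟩ := exists_gap hp hc2 hy0 hy0c hSBe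
        have hexB : ∀ t, t < p → ¬(gB1 ≤ t ∧ t ≤ gB2) → ∃ y ∈ X2, phi c y.2 = t := by
          intro t htp hnr
          by_contra hcc; push_neg at hcc
          exact hnr ((hSB t htp).mp hcc)
        have hX2out : ∀ y ∈ X2, ¬(gB1 ≤ phi c y.2 ∧ phi c y.2 ≤ gB2) :=
          fun y hy hr => ((hSB _ (phi_lt _ _)).mpr hr) y hy rfl
        apply finisher hdYY ((0 : Fin 2), c + (gB1 : ZMod p)) ((1 : Fin 2), c + (gB1 : ZMod p))
          ((0 : Fin 2), c + (gB2 : ZMod p)) ((1 : Fin 2), c + (gB2 : ZMod p))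
        intro k
        by_contra hcc
        push_neg at hcc
        have hav1 : ∀ v ∈ Y k, phi c v.2 ≠ gB1 :=
          avoid_col_free (by omega) c (fun v hv => ⟨(hcc v hv).1, (hcc v hv).2.1⟩)
        have hav2 : ∀ v ∈ Y k, phi c v.2 ≠ gB2 :=
          avoid_col_free (by omega) c (fun v hv => ⟨(hcc v hv).2.2.1, (hcc v hv).2.2.2⟩)
        refine gapLeaf hp c gB1 gB2 hbB1 hbB3 ?_ hX2out (hadj k).2
          (fun v hv => ⟨hav1 v hv, hav2 v hv⟩)
        intro v hv
        by_contra hr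
        push_neg at hr
        obtain ⟨y', hy', hphiy'⟩ := hexB _ (phi_lt c v.2) (fun hh => absurd hh (by omega))
        obtain ⟨x', hx', hphix'⟩ := hexA _ (phi_lt c v.2)
        have hxy : x' ≠ y' := fun he => Set.disjoint_left.mp hd12 hx' (he ▸ hy')
        rcases mem_pair_of_col (phi_inj hphix') (phi_inj hphiy') hxy with he | he
        · exact Set.disjoint_left.mp (hdXY k).1 (he ▸ hx' : v ∈ X1) hv
        · exact Set.disjoint_left.mp (hdXY k).2 (he ▸ hy' : v ∈ X2) hv
      · -- both occupy everything: no room for Y 0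
        have hexB : ∀ t, t < p → ∃ y ∈ X2, phi c y.2 = t := by
          intro t htp
          by_contra hcc; push_neg at hcc
          exact hSBe ⟨t, htp, hcc⟩
        obtain ⟨v, hv⟩ := conn_nonempty (hcY 0)
        obtain ⟨x', hx', hphix'⟩ := hexA _ (phi_lt c v.2)
        obtain ⟨y', hy', hphiy'⟩ := hexB _ (phi_lt c v.2)
        have hxy : x' ≠ y' := fun he => Set.disjoint_left.mp hd12 hx' (he ▸ hy')
        rcases mem_pair_of_col (phi_inj hphix') (phi_inj hphiy') hxy with he | he
        · exact Set.disjoint_left.mp (hdXY 0).1 (he ▸ hx' : v ∈ X1) hv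
        · exact Set.disjoint_left.mp (hdXY 0).2 (he ▸ hy' : v ∈ X2) hv
  · -- CASE T : disjoint column images
    push_neg at hOT
    obtain ⟨y0, hy0⟩ := conn_nonempty hc2
    set e := y0.2 with he
    have hAvE : ∀ v ∈ X1, v.2 ≠ e := fun v hv => hOT v hv y0 hy0
    obtain ⟨m, M, hm1, hmM, hMp, ⟨xm, hxm, hphixm⟩, ⟨xM, hxM, hphixM⟩, hX1in⟩ :=
      exists_interval hp hc1 e hAvE
    have hSBe : ∃ t, t < p ∧ ∀ v ∈ X2, phi e v.2 ≠ t := by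
      refine ⟨m, by omega, fun y hy hphiy => ?_⟩
      exact hOT xm hxm y hy (phi_inj (hphixm.trans hphiy.symm))
    obtain ⟨g1, g2, hg1, hg12, hg2p, hSB⟩ := exists_gap hp hc2 hy0 rfl hSBe
    have hg1m : g1 ≤ m := by
      refine ((hSB m (by omega)).mp (fun y hy hphiy => ?_)).1
      exact hOT xm hxm y hy (phi_inj (hphixm.trans hphiy.symm))
    have hMg2 : M ≤ g2 := by
      refine ((hSB M (by omega)).mp (fun y hy hphiy => ?_)).2
      exact hOT xM hxM y hy (phi_inj (hphixM.trans hphiy.symm))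
    have hX2out : ∀ y ∈ X2, ¬(g1 ≤ phi e y.2 ∧ phi e y.2 ≤ g2) :=
      fun y hy hr => ((hSB _ (phi_lt _ _)).mpr hr) y hy rfl
    have hexB : ∀ t, t < p → ¬(g1 ≤ t ∧ t ≤ g2) → ∃ y ∈ X2, phi e y.2 = t := by
      intro t htp hnr
      by_contra hcc; push_neg at hcc
      exact hnr ((hSB t htp).mp hcc)
    by_cases hHL : g1 < m
    · by_cases hHR : M < g2
      · -- T1 : free columns on both sides
        apply finisher hdYY ((0 : Fin 2), e + ((m - 1 : ℕ) : ZMod p))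
          ((1 : Fin 2), e + ((m - 1 : ℕ) : ZMod p))
          ((0 : Fin 2), e + ((M + 1 : ℕ) : ZMod p)) ((1 : Fin 2), e + ((M + 1 : ℕ) : ZMod p))
        intro k
        by_contra hcc
        push_neg at hcc
        have hav1 : ∀ v ∈ Y k, phi e v.2 ≠ m - 1 :=
          avoid_col_free (by omega) e (fun v hv => ⟨(hcc v hv).1, (hcc v hv).2.1⟩)
        have hav2 : ∀ v ∈ Y k, phi e v.2 ≠ M + 1 :=
          avoid_col_free (by omega) e (fun v hv => ⟨(hcc v hv).2.2.1, (hcc v hv).2.2.2⟩)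
        have hYav : ∀ v ∈ Y k, phi e v.2 ≠ m - 1 ∧ phi e v.2 ≠ M + 1 :=
          fun v hv => ⟨hav1 v hv, hav2 v hv⟩
        obtain ⟨x, hx, u, hu, hxu⟩ := (hadj k).1
        obtain ⟨y, hy, w, hw, hyw⟩ := (hadj k).2
        have hiff := reach_side2 (by omega) (hcY k) e (m - 1) (M + 1) (by omega) hYav u hu w hw
        have hIu : m - 1 < phi e u.2 ∧ phi e u.2 < M + 1 := by
          have h5u := adj_phi_total (by omega) hxu e
          have f1 := hX1in x hx
          have f3 := hYav u hu
          have l1 := phi_lt e x.2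
          have l2 := phi_lt e u.2
          clear hiff
          omega
        have hIw : ¬(m - 1 < phi e w.2 ∧ phi e w.2 < M + 1) := by
          have h5w := adj_phi_total (by omega) hyw e
          have f2 := hX2out y hy
          have f4 := hYav w hw
          have l3 := phi_lt e y.2
          have l4 := phi_lt e w.2
          clear hiff hIu
          omega
        exact hIw (hiff.mp hIu)
      · -- T3 : free column on the left, touching on the right (g2 = M)
        have hg2M : g2 = M := by omega
        have hv2 : ∃ v2, v2 < p ∧ ¬(g1 ≤ v2 ∧ v2 ≤ g2) ∧ (v2 = M + 1 ∨ (v2 = 0 ∧ M + 1 = p)) := by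
          by_cases hMp2 : M + 1 < p
          · exact ⟨M + 1, hMp2, by omega, Or.inl rfl⟩
          · exact ⟨0, by omega, by omega, Or.inr ⟨rfl, by omega⟩⟩
        obtain ⟨v2, hv2p, hv2out, hv2eq⟩ := hv2
        obtain ⟨yR, hyR, hphiyR⟩ := hexB v2 hv2p hv2out
        apply finisher hdYY ((0 : Fin 2), e + ((m - 1 : ℕ) : ZMod p))
          ((1 : Fin 2), e + ((m - 1 : ℕ) : ZMod p)) (otherV xM) (otherV yR)
        intro k
        by_contra hcc
        push_neg at hcc
        have hav1 : ∀ v ∈ Y k, phi e v.2 ≠ m - 1 :=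
          avoid_col_free (by omega) e (fun v hv => ⟨(hcc v hv).1, (hcc v hv).2.1⟩)
        have hav2 : ∀ v ∈ Y k, phi e v.2 ≠ M := by
          have := avoid_col_occ e hxM (hdXY k).1 (fun v hv => (hcc v hv).2.2.1)
          rwa [hphixM] at this
        have hav3 : ∀ v ∈ Y k, phi e v.2 ≠ v2 := by
          have := avoid_col_occ e hyR (hdXY k).2 (fun v hv => (hcc v hv).2.2.2)
          rwa [hphiyR] at this
        have hYav : ∀ v ∈ Y k, phi e v.2 ≠ m - 1 ∧ phi e v.2 ≠ M :=
          fun v hv => ⟨hav1 v hv, hav2 v hv⟩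
        obtain ⟨x, hx, u, hu, hxu⟩ := (hadj k).1
        obtain ⟨y, hy, w, hw, hyw⟩ := (hadj k).2
        have hiff := reach_side2 (by omega) (hcY k) e (m - 1) M (by omega) hYav u hu w hw
        have hIu : m - 1 < phi e u.2 ∧ phi e u.2 < M := by
          have h5u := adj_phi_total (by omega) hxu e
          have f1 := hX1in x hx
          have f3 := hYav u hu
          have f5 := hav3 u hu
          have l1 := phi_lt e x.2
          have l2 := phi_lt e u.2
          clear hiff
          omega
        have hIw : ¬(m - 1 < phi e w.2 ∧ phi e w.2 < M) := by
          have h5w := adj_phi_total (by omega) hyw e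
          have f2 := hX2out y hy
          have f4 := hYav w hw
          have f6 := hav3 w hw
          have l3 := phi_lt e y.2
          have l4 := phi_lt e w.2
          clear hiff hIu
          omega
        exact hIw (hiff.mp hIu)
    · have hg1m' : g1 = m := by omega
      by_cases hHR : M < g2
      · -- T2 : touching on the left (g1 = m), free column on the right
        obtain ⟨yL, hyL, hphiyL⟩ := hexB (m - 1) (by omega) (by omega)
        apply finisher hdYY (otherV yL) (otherV xm)
          ((0 : Fin 2), e + ((M + 1 : ℕ) : ZMod p)) ((1 : Fin 2), e + ((M + 1 : ℕ) : ZMod p))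
        intro k
        by_contra hcc
        push_neg at hcc
        have hav1 : ∀ v ∈ Y k, phi e v.2 ≠ m - 1 := by
          have := avoid_col_occ e hyL (hdXY k).2 (fun v hv => (hcc v hv).1)
          rwa [hphiyL] at this
        have hav2 : ∀ v ∈ Y k, phi e v.2 ≠ m := by
          have := avoid_col_occ e hxm (hdXY k).1 (fun v hv => (hcc v hv).2.1)
          rwa [hphixm] at this
        have hav3 : ∀ v ∈ Y k, phi e v.2 ≠ M + 1 :=
          avoid_col_free (by omega) e (fun v hv => ⟨(hcc v hv).2.2.1, (hcc v hv).2.2.2⟩)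
        have hYav : ∀ v ∈ Y k, phi e v.2 ≠ m - 1 ∧ phi e v.2 ≠ M + 1 :=
          fun v hv => ⟨hav1 v hv, hav3 v hv⟩
        obtain ⟨x, hx, u, hu, hxu⟩ := (hadj k).1
        obtain ⟨y, hy, w, hw, hyw⟩ := (hadj k).2
        have hiff := reach_side2 (by omega) (hcY k) e (m - 1) (M + 1) (by omega) hYav u hu w hw
        have hIu : m - 1 < phi e u.2 ∧ phi e u.2 < M + 1 := by
          have h5u := adj_phi_total (by omega) hxu e
          have f1 := hX1in x hx
          have f3 := hYav u hu
          have f5 := hav2 u hu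
          have l1 := phi_lt e x.2
          have l2 := phi_lt e u.2
          clear hiff
          omega
        have hIw : ¬(m - 1 < phi e w.2 ∧ phi e w.2 < M + 1) := by
          have h5w := adj_phi_total (by omega) hyw e
          have f2 := hX2out y hy
          have f4 := hYav w hw
          have f6 := hav2 w hw
          have l3 := phi_lt e y.2
          have l4 := phi_lt e w.2
          clear hiff hIu
          omega
        exact hIw (hiff.mp hIu)
      · -- T4 : touching on both sides (g1 = m, g2 = M)
        have hg2M : g2 = M := by omega
        have hv2 : ∃ v2, v2 < p ∧ ¬(g1 ≤ v2 ∧ v2 ≤ g2) ∧ (v2 = M + 1 ∨ (v2 = 0 ∧ M + 1 = p)) := by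
          by_cases hMp2 : M + 1 < p
          · exact ⟨M + 1, hMp2, by omega, Or.inl rfl⟩
          · exact ⟨0, by omega, by omega, Or.inr ⟨rfl, by omega⟩⟩
        obtain ⟨v2, hv2p, hv2out, hv2eq⟩ := hv2
        obtain ⟨yR, hyR, hphiyR⟩ := hexB v2 hv2p hv2out
        obtain ⟨yL, hyL, hphiyL⟩ := hexB (m - 1) (by omega) (by omega)
        apply finisher hdYY (otherV xm) (otherV xM) (otherV yL) (otherV yR)
        intro k
        by_contra hcc
        push_neg at hcc
        have hav1 : ∀ v ∈ Y k, phi e v.2 ≠ m := by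
          have := avoid_col_occ e hxm (hdXY k).1 (fun v hv => (hcc v hv).1)
          rwa [hphixm] at this
        have hav2 : ∀ v ∈ Y k, phi e v.2 ≠ M := by
          have := avoid_col_occ e hxM (hdXY k).1 (fun v hv => (hcc v hv).2.1)
          rwa [hphixM] at this
        have hav3 : ∀ v ∈ Y k, phi e v.2 ≠ m - 1 := by
          have := avoid_col_occ e hyL (hdXY k).2 (fun v hv => (hcc v hv).2.2.1)
          rwa [hphiyL] at this
        have hav4 : ∀ v ∈ Y k, phi e v.2 ≠ v2 := by
          have := avoid_col_occ e hyR (hdXY k).2 (fun v hv => (hcc v hv).2.2.2)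
          rwa [hphiyR] at this
        have hYav : ∀ v ∈ Y k, phi e v.2 ≠ m ∧ phi e v.2 ≠ M :=
          fun v hv => ⟨hav1 v hv, hav2 v hv⟩
        obtain ⟨x, hx, u, hu, hxu⟩ := (hadj k).1
        obtain ⟨y, hy, w, hw, hyw⟩ := (hadj k).2
        have hiff := reach_side2 (by omega) (hcY k) e m M (by omega) hYav u hu w hw
        have hIu : m < phi e u.2 ∧ phi e u.2 < M := by
          have h5u := adj_phi_total (by omega) hxu e
          have f1 := hX1in x hx
          have f3 := hYav u hu
          have f5 := hav3 u hu
          have f6 := hav4 u hu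
          have l1 := phi_lt e x.2
          have l2 := phi_lt e u.2
          clear hiff
          omega
        have hIw : ¬(m < phi e w.2 ∧ phi e w.2 < M) := by
          have h5w := adj_phi_total (by omega) hyw e
          have f2 := hX2out y hy
          have f4 := hYav w hw
          have f7 := hav3 w hw
          have f8 := hav4 w hw
          have l3 := phi_lt e y.2
          have l4 := phi_lt e w.2
          clear hiff hIu
          omega
        exact hIw (hiff.mp hIu)

end
end BagelNoK25

/-- for every even `n ≥ 6`, the bagel graph `B_n = K₂ ⊠ C_{n/2}`
contains no `K_{2,5}` minor. -/
theorem bagel_no_K25_minor (n : ℕ) (hn : 6 ≤ n) (heven : Even n) :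
    ¬ ∃ (X1 X2 : Set (Fin 2 × ZMod (n / 2))) (Y : Fin 5 → Set (Fin 2 × ZMod (n / 2))),
      IsK2Model (Bagel (n / 2)) X1 X2 Y := by
  rintro ⟨X1, X2, Y, h⟩
  have hp : 3 ≤ n / 2 := by omega
  haveI : NeZero (n / 2) := ⟨by omega⟩
  exact BagelNoK25.no_model hp X1 X2 Y h
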